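/- Let f and P be Laurent polynomials: f = X^s F and P = X^k Q as rational functions in ℂ(X), where s, k ∈ ℤ, F, Q ∈ ℂ[X], Q ≠ 0 and Q(0) ≠ 0. Let g := f·P′/P ∈ ℂ(X), where P′ is the derivative of P. Then the sum Σ f(z)·μ(z), taken over all roots z ∈ ℂ* of P (i.e. over the multiset of roots of Q, μ(z) being the multiplicity), equals −(res₀ ω + res_∞ ω), where: res₀ ω is the coefficient of X^{−1} in the Laurent series expansion of g at 0 (the image of g under the canonical embedding of ℂ(X) into formal Laurent series), and res_∞ ω := −(the coefficient of X^{−1} in the Laurent series expansion at 0 of X^{−2}·ĝ), where ĝ is the image of g under the ℂ-algebra field endomorphism of ℂ(X) sending X to X^{−1}. -/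

import Mathlib

open Polynomial
noncomputable section

-- residue functional pieces: test basic facts
example : Field (LaurentSeries ℂ) := inferInstance

-- single zpow
lemma hs_single_zpow (n : ℤ) :
    (HahnSeries.single (1:ℤ) (1:ℂ))^n = HahnSeries.single n 1 := by
  have key : ∀ m : ℕ, (HahnSeries.single (1:ℤ) (1:ℂ))^m = HahnSeries.single (m:ℤ) 1 := by
    intro m
    rw [HahnSeries.single_pow]
    simp
  obtain ⟨m, rfl | rfl⟩ := n.eq_nat_or_neg
  · rw [zpow_natCast, key]
  · rw [zpow_neg, zpow_natCast, key]
    refine inv_eq_of_mul_eq_one_right ?_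
    rw [HahnSeries.single_mul_single]
    simp [← HahnSeries.C_apply]

-- coercion of X^n
lemma coe_X_zpow (n : ℤ) :
    (((RatFunc.X ^ n : RatFunc ℂ)) : LaurentSeries ℂ) = HahnSeries.single n 1 := by
  rw [map_zpow₀, RatFunc.coe_X, hs_single_zpow]

-- coe of inverse of polynomial with nonzero constant coeff
lemma coe_inv_poly (p : ℂ[X]) (hp : p.coeff 0 ≠ 0) :
    (((algebraMap ℂ[X] (RatFunc ℂ) p)⁻¹ : RatFunc ℂ) : LaurentSeries ℂ) =
      HahnSeries.ofPowerSeries ℤ ℂ ((p : PowerSeries ℂ)⁻¹) := by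
  have hc : PowerSeries.constantCoeff (p : PowerSeries ℂ) ≠ 0 := by
    rwa [← PowerSeries.coeff_zero_eq_constantCoeff_apply, Polynomial.coeff_coe]
  have h1 : ((algebraMap ℂ[X] (RatFunc ℂ) p : RatFunc ℂ) : LaurentSeries ℂ)
      = HahnSeries.ofPowerSeries ℤ ℂ (p : PowerSeries ℂ) := by
    rw [← IsScalarTower.algebraMap_apply, Polynomial.algebraMap_hahnSeries_apply]
  rw [map_inv₀, h1]
  refine inv_eq_of_mul_eq_one_right ?_
  rw [← map_mul, PowerSeries.mul_inv_cancel _ hc, map_one]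

def Tres (σ : RatFunc ℂ →ₐ[ℂ] RatFunc ℂ) (h : RatFunc ℂ) : ℂ :=
  ((h : LaurentSeries ℂ).coeff (-1)) -
    (((RatFunc.X ^ (-2:ℤ) * σ h : RatFunc ℂ) : LaurentSeries ℂ).coeff (-1))

variable (σ : RatFunc ℂ →ₐ[ℂ] RatFunc ℂ)

lemma Tres_add (a b : RatFunc ℂ) : Tres σ (a + b) = Tres σ a + Tres σ b := by
  simp only [Tres, map_add, mul_add, HahnSeries.coeff_add]
  ring

lemma Tres_zero : Tres σ 0 = 0 := by
  simp [Tres]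

lemma Tres_C_mul (a : ℂ) (h : RatFunc ℂ) : Tres σ (RatFunc.C a * h) = a * Tres σ h := by
  have hC : RatFunc.C a = algebraMap ℂ (RatFunc ℂ) a := rfl
  have hσC : σ (RatFunc.C a) = RatFunc.C a := by rw [hC, AlgHom.commutes]
  simp only [Tres, map_mul, hσC]
  have hcomm : RatFunc.X ^ (-2:ℤ) * (RatFunc.C a * σ h) = RatFunc.C a * (RatFunc.X ^ (-2:ℤ) * σ h) := by ring
  rw [mul_left_comm]
  rw [← RatFunc.algebraMap_C, ← IsScalarTower.algebraMap_apply, Polynomial.algebraMap_hahnSeries_apply, Polynomial.coe_C, HahnSeries.ofPowerSeries_C]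
  simp only [HahnSeries.C_apply, HahnSeries.coeff_single_zero_mul]
  ring

lemma Tres_zpow (hσ : σ RatFunc.X = RatFunc.X⁻¹) (n : ℤ) : Tres σ (RatFunc.X ^ n) = 0 := by
  have hX : (RatFunc.X : RatFunc ℂ) ≠ 0 := RatFunc.X_ne_zero
  have hσn : σ (RatFunc.X ^ n) = RatFunc.X ^ (-n) := by
    rw [map_zpow₀, hσ, inv_zpow, ← zpow_neg]
  rw [Tres, hσn, ← zpow_add₀ hX, coe_X_zpow, coe_X_zpow]
  simp only [HahnSeries.coeff_single]
  by_cases h : n = -1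
  · subst h; norm_num
  · rw [if_neg (by omega), if_neg (by omega), sub_zero]

lemma Tres_zpow_mul_poly (hσ : σ RatFunc.X = RatFunc.X⁻¹) (m : ℤ) (p : ℂ[X]) :
    Tres σ (RatFunc.X ^ m * algebraMap ℂ[X] (RatFunc ℂ) p) = 0 := by
  induction p using Polynomial.induction_on' with
  | add p q hp hq =>
    rw [map_add, mul_add, Tres_add, hp, hq, add_zero]
  | monomial n a =>
    have : RatFunc.X ^ m * algebraMap ℂ[X] (RatFunc ℂ) (Polynomial.monomial n a)
        = RatFunc.C a * RatFunc.X ^ (m + n) := by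
      rw [← Polynomial.C_mul_X_pow_eq_monomial, map_mul, map_pow, RatFunc.algebraMap_C,
        RatFunc.algebraMap_X, zpow_add₀ RatFunc.X_ne_zero, zpow_natCast]
      ring
    rw [this, Tres_C_mul, Tres_zpow σ hσ, mul_zero]

lemma Tres_inv_sub (hσ : σ RatFunc.X = RatFunc.X⁻¹) (z : ℂ) (hz : z ≠ 0) :
    Tres σ ((RatFunc.X - RatFunc.C z)⁻¹) = -1 := by
  have hX : (RatFunc.X : RatFunc ℂ) ≠ 0 := RatFunc.X_ne_zero
  have hXC : (RatFunc.X - RatFunc.C z : RatFunc ℂ)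
      = algebraMap ℂ[X] (RatFunc ℂ) (X - C z) := by
    rw [map_sub, RatFunc.algebraMap_X, RatFunc.algebraMap_C]
  -- part 1 : coefficient of X⁻¹ at 0 is 0
  have part1 : (((RatFunc.X - RatFunc.C z : RatFunc ℂ)⁻¹ : RatFunc ℂ) :
      LaurentSeries ℂ).coeff (-1) = 0 := by
    rw [hXC, coe_inv_poly _ (by simp [hz])]
    rw [show ((HahnSeries.ofPowerSeries ℤ ℂ) ((X - C z : ℂ[X]) : PowerSeries ℂ)⁻¹)
        = (((((X - C z : ℂ[X]) : PowerSeries ℂ)⁻¹ : PowerSeries ℂ)) : LaurentSeries ℂ) from rfl,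
      PowerSeries.coeff_coe]
    simp
  -- part 2
  have hW : (1 - Polynomial.C z * Polynomial.X : ℂ[X]) ≠ 0 := by
    intro h
    have := congrArg (fun p => Polynomial.coeff p 0) h
    simp at this
  have hWR : (algebraMap ℂ[X] (RatFunc ℂ) (1 - Polynomial.C z * Polynomial.X)) ≠ 0 :=
    RatFunc.algebraMap_ne_zero hW
  have hWeq : (algebraMap ℂ[X] (RatFunc ℂ) (1 - Polynomial.C z * Polynomial.X))
      = 1 - RatFunc.C z * RatFunc.X := by
    rw [map_sub, map_one, map_mul, RatFunc.algebraMap_C, RatFunc.algebraMap_X]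
  have hinv : σ ((RatFunc.X - RatFunc.C z)⁻¹)
      = RatFunc.X * (algebraMap ℂ[X] (RatFunc ℂ) (1 - Polynomial.C z * Polynomial.X))⁻¹ := by
    rw [map_inv₀, map_sub, hσ]
    have hσC : σ (RatFunc.C z) = RatFunc.C z := AlgHom.commutes σ z
    rw [hσC]
    have hmul : (RatFunc.X⁻¹ - RatFunc.C z) *
        (RatFunc.X * (algebraMap ℂ[X] (RatFunc ℂ) (1 - Polynomial.C z * Polynomial.X))⁻¹)
        = 1 := by
      have h1 : (RatFunc.X⁻¹ - RatFunc.C z) * RatFunc.X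
          = algebraMap ℂ[X] (RatFunc ℂ) (1 - Polynomial.C z * Polynomial.X) := by
        rw [hWeq, sub_mul, inv_mul_cancel₀ hX]
      rw [← mul_assoc, h1, mul_inv_cancel₀ hWR]
    exact inv_eq_of_mul_eq_one_right hmul
  have part2 : (((RatFunc.X ^ (-2:ℤ) * σ ((RatFunc.X - RatFunc.C z)⁻¹) : RatFunc ℂ)) :
      LaurentSeries ℂ).coeff (-1) = 1 := by
    rw [hinv]
    have hcomb : RatFunc.X ^ (-2:ℤ) * (RatFunc.X *
        (algebraMap ℂ[X] (RatFunc ℂ) (1 - Polynomial.C z * Polynomial.X))⁻¹)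
        = RatFunc.X ^ (-1:ℤ) *
          (algebraMap ℂ[X] (RatFunc ℂ) (1 - Polynomial.C z * Polynomial.X))⁻¹ := by
      rw [show ((-1:ℤ)) = -2 + 1 by ring, zpow_add₀ hX, zpow_one]
      ring
    rw [hcomb, map_mul, coe_X_zpow, coe_inv_poly _ (by simp)]
    have key := HahnSeries.coeff_single_mul_add (Γ := ℤ) (R := ℂ) (r := (1:ℂ))
      (x := (HahnSeries.ofPowerSeries ℤ ℂ)
        (((1 - Polynomial.C z * Polynomial.X : ℂ[X]) : PowerSeries ℂ)⁻¹)) (a := 0) (b := -1)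
    rw [show ((0:ℤ) + -1) = -1 by ring, one_mul] at key
    rw [key]
    rw [show ((HahnSeries.ofPowerSeries ℤ ℂ)
        ((1 - Polynomial.C z * Polynomial.X : ℂ[X]) : PowerSeries ℂ)⁻¹)
        = ((((1 - Polynomial.C z * Polynomial.X : ℂ[X]) : PowerSeries ℂ)⁻¹ : PowerSeries ℂ)
          : LaurentSeries ℂ) from rfl, PowerSeries.coeff_coe]
    simp [PowerSeries.constantCoeff_inv]
  rw [Tres, part1, part2]
  norm_num

lemma Tres_root (hσ : σ RatFunc.X = RatFunc.X⁻¹) (s : ℤ) (F : ℂ[X]) (z : ℂ) (hz : z ≠ 0) :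
    Tres σ (RatFunc.X ^ s * algebraMap ℂ[X] (RatFunc ℂ) F * (RatFunc.X - RatFunc.C z)⁻¹)
      = -(z ^ s * F.eval z) := by
  have hX : (RatFunc.X : RatFunc ℂ) ≠ 0 := RatFunc.X_ne_zero
  set b : ℕ := (-s).toNat with hb
  set a : ℕ := (s + b).toNat with haa
  have ha : (a : ℤ) = s + b := by
    rw [haa, hb]; omega
  set W : ℂ[X] := X ^ a * F - C (z ^ s * F.eval z) * X ^ b with hWdef
  have hroot : W.IsRoot z := by
    simp only [IsRoot, hWdef, eval_sub, eval_mul, eval_pow, eval_X, eval_C]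
    have : (z:ℂ) ^ a = z ^ s * z ^ b := by
      rw [← zpow_natCast z a, ha, zpow_add₀ hz, zpow_natCast]
    rw [this]; ring
  obtain ⟨H, hH⟩ : (X - C z) ∣ W := dvd_iff_isRoot.mpr hroot
  have hXCz : (RatFunc.X - RatFunc.C z : RatFunc ℂ) ≠ 0 := by
    intro h
    rw [show (RatFunc.X - RatFunc.C z : RatFunc ℂ)
      = algebraMap ℂ[X] (RatFunc ℂ) (X - C z) by rw [map_sub, RatFunc.algebraMap_X,
        RatFunc.algebraMap_C]] at h
    exact Polynomial.X_sub_C_ne_zero z (RatFunc.algebraMap_injective ℂ (by simpa using h))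
  have split : RatFunc.X ^ s * algebraMap ℂ[X] (RatFunc ℂ) F * (RatFunc.X - RatFunc.C z)⁻¹
      = RatFunc.X ^ (-(b:ℤ)) * algebraMap ℂ[X] (RatFunc ℂ) H
        + RatFunc.C (z ^ s * F.eval z) * (RatFunc.X - RatFunc.C z)⁻¹ := by
    have hXsF : RatFunc.X ^ s * algebraMap ℂ[X] (RatFunc ℂ) F
        = RatFunc.X ^ (-(b:ℤ)) * algebraMap ℂ[X] (RatFunc ℂ) (X ^ a * F) := by
      rw [map_mul, map_pow, RatFunc.algebraMap_X, ← zpow_natCast (RatFunc.X : RatFunc ℂ) a,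
        ha, ← mul_assoc, ← zpow_add₀ hX]
      norm_num
    have hWsplit : algebraMap ℂ[X] (RatFunc ℂ) (X ^ a * F)
        = (RatFunc.X - RatFunc.C z) * algebraMap ℂ[X] (RatFunc ℂ) H
          + RatFunc.C (z ^ s * F.eval z) * RatFunc.X ^ (b:ℤ) := by
      have : (X ^ a * F : ℂ[X]) = (X - C z) * H + C (z ^ s * F.eval z) * X ^ b := by
        rw [← hH, hWdef]; ring
      rw [this, map_add, map_mul, map_mul, map_sub, map_pow, RatFunc.algebraMap_X,
        RatFunc.algebraMap_C, RatFunc.algebraMap_C, zpow_natCast]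
    rw [hXsF, hWsplit, mul_add, add_mul]
    congr 1
    · rw [mul_comm (RatFunc.X - RatFunc.C z) _, mul_assoc, mul_assoc,
        mul_inv_cancel₀ hXCz, mul_one]
    · have h1 : (RatFunc.X : RatFunc ℂ) ^ (-(b:ℤ)) * RatFunc.X ^ (b:ℤ) = 1 := by
        rw [← zpow_add₀ hX]; norm_num
      rw [mul_comm (RatFunc.C _) _, ← mul_assoc, h1, one_mul]
  rw [split, Tres_add, Tres_zpow_mul_poly σ hσ, Tres_C_mul, Tres_inv_sub σ hσ z hz]
  ring

lemma logderiv_sum : ∀ (n : ℕ) (Q : ℂ[X]), Q ≠ 0 → Q.natDegree = n →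
    algebraMap ℂ[X] (RatFunc ℂ) (derivative Q) / algebraMap ℂ[X] (RatFunc ℂ) Q
      = (Q.roots.map fun z => (RatFunc.X - RatFunc.C z)⁻¹).sum := by
  intro n
  induction n with
  | zero =>
    intro Q hQ h0
    have : Q = C (Q.coeff 0) := eq_C_of_natDegree_eq_zero h0
    rw [this]
    simp [roots_C]
  | succ n ih =>
    intro Q hQ hdeg
    have hdegpos : 0 < Q.degree := by
      rw [← natDegree_pos_iff_degree_pos, hdeg]; omega
    obtain ⟨z, hz⟩ := Complex.exists_root hdegpos
    obtain ⟨H, hH⟩ : (X - C z) ∣ Q := dvd_iff_isRoot.mpr hz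
    have hXCne : (X - C z : ℂ[X]) ≠ 0 := X_sub_C_ne_zero z
    have hHne : H ≠ 0 := by rintro rfl; rw [mul_zero] at hH; exact hQ hH
    have hHdeg : H.natDegree = n := by
      have := natDegree_mul hXCne hHne
      rw [← hH, hdeg, natDegree_X_sub_C] at this
      omega
    have hroots : Q.roots = z ::ₘ H.roots := by
      rw [hH, roots_mul (hH ▸ hQ), roots_X_sub_C]
      rfl
    have hder : derivative Q = H + (X - C z) * derivative H := by
      rw [hH, derivative_mul]
      simp
    have hXC : (RatFunc.X - RatFunc.C z : RatFunc ℂ)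
        = algebraMap ℂ[X] (RatFunc ℂ) (X - C z) := by
      rw [map_sub, RatFunc.algebraMap_X, RatFunc.algebraMap_C]
    have hXCne' : (RatFunc.X - RatFunc.C z : RatFunc ℂ) ≠ 0 := by
      rw [hXC]; exact RatFunc.algebraMap_ne_zero hXCne
    have hHne' : algebraMap ℂ[X] (RatFunc ℂ) H ≠ 0 := RatFunc.algebraMap_ne_zero hHne
    rw [hroots, Multiset.map_cons, Multiset.sum_cons, ← ih H hHne hHdeg, hder, hH]
    rw [map_add, map_mul, map_mul, map_sub, RatFunc.algebraMap_X, RatFunc.algebraMap_C]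
    rw [div_eq_iff (mul_ne_zero hXCne' hHne')]
    field_simp

lemma quot_rule (P : RatFunc ℂ) (A B : ℂ[X]) (hB : B ≠ 0)
    (hP : P = algebraMap ℂ[X] (RatFunc ℂ) A / algebraMap ℂ[X] (RatFunc ℂ) B) :
    (algebraMap ℂ[X] (RatFunc ℂ) (derivative P.num * P.denom - P.num * derivative P.denom) /
      algebraMap ℂ[X] (RatFunc ℂ) (P.denom ^ 2) : RatFunc ℂ)
    = algebraMap ℂ[X] (RatFunc ℂ) (derivative A * B - A * derivative B) /
      algebraMap ℂ[X] (RatFunc ℂ) (B ^ 2) := by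
  set N := P.num with hN
  set D := P.denom with hD
  have hDne : D ≠ 0 := P.denom_ne_zero
  have hcross : A * D = N * B := by
    have h1 : algebraMap ℂ[X] (RatFunc ℂ) A / algebraMap ℂ[X] (RatFunc ℂ) B
        = algebraMap ℂ[X] (RatFunc ℂ) N / algebraMap ℂ[X] (RatFunc ℂ) D := by
      rw [← hP, hN, hD, RatFunc.num_div_denom]
    rw [div_eq_div_iff (RatFunc.algebraMap_ne_zero hB) (RatFunc.algebraMap_ne_zero hDne)] at h1
    exact RatFunc.algebraMap_injective ℂ (by rw [map_mul, map_mul]; exact h1)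
  have hder : derivative A * D + A * derivative D = derivative N * B + N * derivative B := by
    have := congrArg derivative hcross
    rwa [derivative_mul, derivative_mul] at this
  have key : (derivative N * D - N * derivative D) * B ^ 2
      = (derivative A * B - A * derivative B) * D ^ 2 := by
    linear_combination (-(B * D)) * hder + (derivative B * D + B * derivative D) * hcross
  rw [div_eq_div_iff (RatFunc.algebraMap_ne_zero (pow_ne_zero 2 hDne))
    (RatFunc.algebraMap_ne_zero (pow_ne_zero 2 hB)), ← map_mul, ← map_mul]
  exact congrArg _ key

lemma hxpow (n : ℕ) : (X : ℂ[X]) * (C (n : ℂ) * X ^ (n - 1)) = C (n : ℂ) * X ^ n := by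
  cases n with
  | zero => simp
  | succ n => rw [Nat.add_sub_cancel, pow_succ]; ring

lemma polyid (a b : ℕ) (Q : ℂ[X]) :
    (X : ℂ[X]) * (derivative (X ^ a * Q) * X ^ b - (X ^ a * Q) * derivative (X ^ b))
    = X ^ (a + b) * (C ((a : ℂ) - (b : ℂ)) * Q + X * derivative Q) := by
  rw [derivative_mul, derivative_X_pow, derivative_X_pow, map_sub, pow_add]
  linear_combination (X ^ b * Q) * hxpow a - (X ^ a * Q) * hxpow b

lemma Tres_multiset_sum (m : Multiset ℂ) (f : ℂ → RatFunc ℂ) :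
    Tres σ ((m.map f).sum) = (m.map fun z => Tres σ (f z)).sum := by
  induction m using Multiset.induction_on with
  | empty => simp [Tres_zero]
  | cons a t ih => simp only [Multiset.map_cons, Multiset.sum_cons, Tres_add, ih]

/-- Let `f = X^s F` and `P = X^k Q` be Laurent polynomials viewed as rational
functions in `ℂ(X)`, with `Q ≠ 0` and `Q(0) ≠ 0`, and let `g = f·P′/P`, where
`P′ = (num P)′·denom P - num P·(denom P)′) / (denom P)²` is the derivative of `P`. Then the
sum `Σ f(z)·μ(z)` over the roots `z ∈ ℂ*` of `P` (i.e. over the multiset of roots of `Q`)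
equals `-(res₀ ω + res_∞ ω)`, where `res₀ ω` is the coefficient of `X⁻¹` in the Laurent
expansion of `g` at `0`, and `res_∞ ω = -(coefficient of `X⁻¹` in the Laurent expansion at
`0` of `X⁻²·ĝ`)`, `ĝ` being the image of `g` under the `ℂ`-algebra endomorphism `σ` of
`ℂ(X)` sending `X` to `X⁻¹`. -/
theorem stmt3 (s k : ℤ) (F Q : Polynomial ℂ) (hQ : Q ≠ 0) (hQ0 : Q.eval 0 ≠ 0)
    (σ : RatFunc ℂ →ₐ[ℂ] RatFunc ℂ) (hσ : σ RatFunc.X = RatFunc.X⁻¹)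
    (f P g : RatFunc ℂ)
    (hf : f = RatFunc.X ^ s * algebraMap (Polynomial ℂ) (RatFunc ℂ) F)
    (hP : P = RatFunc.X ^ k * algebraMap (Polynomial ℂ) (RatFunc ℂ) Q)
    (hg : g = f *
      (algebraMap (Polynomial ℂ) (RatFunc ℂ)
          (Polynomial.derivative P.num * P.denom - P.num * Polynomial.derivative P.denom) /
        algebraMap (Polynomial ℂ) (RatFunc ℂ) (P.denom ^ 2)) / P) :
    (Q.roots.map fun z => z ^ s * F.eval z).sum =
      -(((g : LaurentSeries ℂ).coeff (-1)) +
        -(((RatFunc.X ^ (-2 : ℤ) * σ g : RatFunc ℂ) : LaurentSeries ℂ).coeff (-1))) := by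
  have hX : (RatFunc.X : RatFunc ℂ) ≠ 0 := RatFunc.X_ne_zero
  have hQne : algebraMap ℂ[X] (RatFunc ℂ) Q ≠ 0 := RatFunc.algebraMap_ne_zero hQ
  set b : ℕ := (-k).toNat with hbdef
  set a : ℕ := (k + b).toNat with hadef
  have ha : (a : ℤ) = k + b := by rw [hadef, hbdef]; omega
  set A : ℂ[X] := X ^ a * Q with hAdef
  set B : ℂ[X] := X ^ b with hBdef
  have hBne : B ≠ 0 := pow_ne_zero _ X_ne_zero
  have hPAB : P = algebraMap ℂ[X] (RatFunc ℂ) A / algebraMap ℂ[X] (RatFunc ℂ) B := by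
    rw [hP, hAdef, hBdef, map_mul, map_pow, map_pow, RatFunc.algebraMap_X,
      ← zpow_natCast (RatFunc.X : RatFunc ℂ) a, ← zpow_natCast (RatFunc.X : RatFunc ℂ) b,
      ha, mul_comm (RatFunc.X ^ ((k:ℤ) + b)) _, mul_div_assoc, ← zpow_sub₀ hX]
    rw [show (k:ℤ) + b - b = k by ring]
    ring
  set W : ℂ[X] := C ((k:ℂ)) * Q + X * derivative Q with hWdef
  have hk : ((a:ℕ):ℂ) - ((b:ℕ):ℂ) = ((k:ℤ):ℂ) := by
    have h2 : ((a:ℤ):ℂ) = (((k + (b:ℤ)):ℤ):ℂ) := by rw [ha]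
    push_cast at h2 ⊢
    rw [h2]; ring
  have hABW : RatFunc.X * algebraMap ℂ[X] (RatFunc ℂ) (derivative A * B - A * derivative B)
      = RatFunc.X ^ ((a:ℤ) + b) * algebraMap ℂ[X] (RatFunc ℂ) W := by
    have h := polyid a b Q
    rw [hk, ← hWdef] at h
    calc RatFunc.X * algebraMap ℂ[X] (RatFunc ℂ) (derivative A * B - A * derivative B)
        = algebraMap ℂ[X] (RatFunc ℂ) (X * (derivative A * B - A * derivative B)) := by
          simp only [map_mul, RatFunc.algebraMap_X]
      _ = algebraMap ℂ[X] (RatFunc ℂ) (X ^ (a + b) * W) := by rw [hAdef, hBdef, h]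
      _ = RatFunc.X ^ ((a:ℤ) + b) * algebraMap ℂ[X] (RatFunc ℂ) W := by
          simp only [map_mul, map_pow, RatFunc.algebraMap_X]
          rw [← zpow_natCast (RatFunc.X : RatFunc ℂ) (a + b)]
          push_cast
          ring
  have hABeq : algebraMap ℂ[X] (RatFunc ℂ) (derivative A * B - A * derivative B)
      = RatFunc.X ^ ((a:ℤ) + b - 1) * algebraMap ℂ[X] (RatFunc ℂ) W := by
    have h2 := congrArg (fun u => (RatFunc.X : RatFunc ℂ)⁻¹ * u) hABW
    simp only [inv_mul_cancel_left₀ hX] at h2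
    rw [h2, ← zpow_neg_one, ← mul_assoc, ← zpow_add₀ hX]
    rw [show (-1 + ((a:ℤ) + b)) = (a:ℤ) + b - 1 by ring]
  have e1 : algebraMap ℂ[X] (RatFunc ℂ) (B ^ 2) = RatFunc.X ^ (2 * (b:ℤ)) := by
    rw [hBdef, ← pow_mul, map_pow, RatFunc.algebraMap_X,
      ← zpow_natCast (RatFunc.X : RatFunc ℂ) (b * 2)]
    push_cast
    ring_nf
  have e2 : algebraMap ℂ[X] (RatFunc ℂ) (derivative A * B - A * derivative B) /
      algebraMap ℂ[X] (RatFunc ℂ) (B ^ 2)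
      = RatFunc.X ^ (k - 1) * algebraMap ℂ[X] (RatFunc ℂ) W := by
    rw [hABeq, e1, div_eq_mul_inv, ← zpow_neg, mul_right_comm, ← zpow_add₀ hX,
      show (a:ℤ) + b - 1 + -(2 * b) = k - 1 by omega]
  have hg2 : g = RatFunc.X ^ (s - 1) * algebraMap ℂ[X] (RatFunc ℂ) F *
      algebraMap ℂ[X] (RatFunc ℂ) W / algebraMap ℂ[X] (RatFunc ℂ) Q := by
    rw [hg, quot_rule P A B hBne hPAB, e2, hf, hP]
    rw [div_eq_div_iff (mul_ne_zero (zpow_ne_zero _ hX) hQne) hQne]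
    have m1 : (RatFunc.X : RatFunc ℂ) ^ s = RatFunc.X ^ (s - 1) * RatFunc.X := by
      rw [← zpow_add_one₀ hX, sub_add_cancel]
    have m2 : (RatFunc.X : RatFunc ℂ) ^ k = RatFunc.X ^ (k - 1) * RatFunc.X := by
      rw [← zpow_add_one₀ hX, sub_add_cancel]
    rw [m1, m2]
    ring
  have hz0 : ∀ z ∈ Q.roots, z ≠ 0 := by
    intro z hzz h
    subst h
    exact hQ0 (Polynomial.isRoot_of_mem_roots hzz)
  have hsum : algebraMap ℂ[X] (RatFunc ℂ) W / algebraMap ℂ[X] (RatFunc ℂ) Q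
      = RatFunc.C ((k:ℤ):ℂ) + RatFunc.X *
        (Q.roots.map fun z => (RatFunc.X - RatFunc.C z)⁻¹).sum := by
    rw [hWdef]
    simp only [map_add, map_mul, RatFunc.algebraMap_C, RatFunc.algebraMap_X]
    rw [add_div, mul_div_assoc, div_self hQne, mul_one, mul_div_assoc,
      logderiv_sum Q.natDegree Q hQ rfl]
  have hg3 : g = RatFunc.X ^ (s - 1) * algebraMap ℂ[X] (RatFunc ℂ) (C ((k:ℤ):ℂ) * F)
      + (Q.roots.map fun z => RatFunc.X ^ s * algebraMap ℂ[X] (RatFunc ℂ) F *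
          (RatFunc.X - RatFunc.C z)⁻¹).sum := by
    rw [hg2, mul_div_assoc, hsum, mul_add]
    congr 1
    · simp only [map_mul, RatFunc.algebraMap_C]
      ring
    · rw [show RatFunc.X ^ (s-1) * algebraMap ℂ[X] (RatFunc ℂ) F *
          (RatFunc.X * (Q.roots.map fun z => (RatFunc.X - RatFunc.C z)⁻¹).sum)
          = (RatFunc.X ^ s * algebraMap ℂ[X] (RatFunc ℂ) F) *
            (Q.roots.map fun z => (RatFunc.X - RatFunc.C z)⁻¹).sum from by
        rw [show (RatFunc.X : RatFunc ℂ) ^ s = RatFunc.X ^ (s - 1) * RatFunc.X from by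
          rw [← zpow_add_one₀ hX, sub_add_cancel]]
        ring]
      rw [← Multiset.sum_map_mul_left]
  -- compute the residue functional of g
  have hT : Tres σ g = -((Q.roots.map fun z => z ^ s * F.eval z).sum) := by
    rw [hg3, Tres_add, Tres_zpow_mul_poly σ hσ, Tres_multiset_sum, zero_add]
    rw [Multiset.map_congr rfl (fun z hzz => Tres_root σ hσ s F z (hz0 z hzz))]
    refine Multiset.induction_on Q.roots (by simp) (fun c t ih => ?_)
    simp only [Multiset.map_cons, Multiset.sum_cons, ih]
    ring
  simp only [Tres] at hT
  rw [← sub_eq_add_neg, hT, neg_neg]
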